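/- arXiv:1907.09101 — 2 statements merged into one kernel-verified Lean document; each statement's English description precedes it below -/
import Mathlib

section
/- The agent-nonrepeating formula (◇_a(p ∨ ¬p) ∧ □_a p) → p is a theorem of KB5 but not a theorem of KD. Hence KB5 restricted to agent-nonrepeating formulas is not contained in KD restricted to agent-nonrepeating formulas. -/
/-- Formulas of the multi-agent modal language: p | ¬φ | (φ ∧ φ) | □_a φ. -/
inductive Fm (A : Type) : Type
  | atom : ℕ → Fm A
  | neg : Fm A → Fm A
  | and : Fm A → Fm A → Fm A
  | box : A → Fm A → Fm A

namespace Fm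
def imp {A : Type} (φ ψ : Fm A) : Fm A := .neg (.and φ (.neg ψ))
def or {A : Type} (φ ψ : Fm A) : Fm A := .neg (.and (.neg φ) (.neg ψ))
def dia {A : Type} (a : A) (φ : Fm A) : Fm A := .neg (.box a (.neg φ))
end Fm

/-- Kripke models with agent set `A` and world type `W`. -/
structure Kripke (A W : Type) where
  R : A → W → W → Prop
  V : ℕ → W → Prop

/-- Satisfaction. -/
def Sat {A W : Type} (M : Kripke A W) : W → Fm A → Prop
  | w, .atom n => M.V n w
  | w, .neg φ => ¬ Sat M w φ
  | w, .and φ ψ => Sat M w φ ∧ Sat M w ψ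
  | w, .box a φ => ∀ v, M.R a w v → Sat M v φ

/-- The fragments L_{-a}: φ ::= p | □_x ψ (x ≠ a, ψ ∈ L_{-x}) | ¬φ | (φ ∧ φ). -/
inductive LMinus {A : Type} : A → Fm A → Prop
  | atom (a : A) (n : ℕ) : LMinus a (.atom n)
  | box {a x : A} {ψ : Fm A} : x ≠ a → LMinus x ψ → LMinus a (.box x ψ)
  | neg {a : A} {φ : Fm A} : LMinus a φ → LMinus a (.neg φ)
  | and {a : A} {φ ψ : Fm A} : LMinus a φ → LMinus a ψ → LMinus a (.and φ ψ)

/-- The agent-alternating fragment L_alt. -/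
inductive LAlt {A : Type} : Fm A → Prop
  | atom (n : ℕ) : LAlt (.atom n)
  | chi {φ : Fm A} (a : A) : LMinus a φ → LAlt φ
  | neg {φ : Fm A} : LAlt φ → LAlt (.neg φ)
  | and {φ ψ : Fm A} : LAlt φ → LAlt ψ → LAlt (.and φ ψ)

/-- The fragments L_X for X ⊆ A: φ ::= p | □_x ψ (x ∈ X, ψ ∈ L_{X\{x}}) | ¬φ | (φ ∧ φ). -/
inductive LX {A : Type} : Set A → Fm A → Prop
  | atom (X : Set A) (n : ℕ) : LX X (.atom n)
  | box {X : Set A} {x : A} {ψ : Fm A} : x ∈ X → LX (X \ {x}) ψ → LX X (.box x ψ)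
  | neg {X : Set A} {φ : Fm A} : LX X φ → LX X (.neg φ)
  | and {X : Set A} {φ ψ : Fm A} : LX X φ → LX X ψ → LX X (.and φ ψ)

/-- Immediate subformula relation. -/
inductive ISub {A : Type} : Fm A → Fm A → Prop
  | neg (φ : Fm A) : ISub φ (.neg φ)
  | andL (φ ψ : Fm A) : ISub φ (.and φ ψ)
  | andR (φ ψ : Fm A) : ISub ψ (.and φ ψ)
  | box (a : A) (φ : Fm A) : ISub φ (.box a φ)

/-- An occurrence type of φ: a nonempty sequence of formulas, each an immediate
subformula of the next, ending in φ. -/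
def IsOcc {A : Type} (l : List (Fm A)) (φ : Fm A) : Prop :=
  l ≠ [] ∧ l.getLast? = some φ ∧ List.Chain' ISub l

/-- A □_a-occurrence of φ. -/
def IsBoxOcc {A : Type} (a : A) (l : List (Fm A)) (φ : Fm A) : Prop :=
  IsOcc l φ ∧ ∃ β, l.head? = some (Fm.box a β)

/-- O ≤ O' iff O' is a suffix of O (prefix-extension order on occurrences). -/
def OccLe {A : Type} (O O' : List (Fm A)) : Prop := O' <:+ O

/-- φ is agent-alternating: between any two nested □_a-occurrences there is a
□_b-occurrence for some b ≠ a. -/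
def AgentAlternating {A : Type} (φ : Fm A) : Prop :=
  ∀ (a : A) (O O' : List (Fm A)), IsBoxOcc a O φ → IsBoxOcc a O' φ → O ≠ O' → OccLe O O' →
    ∃ b : A, b ≠ a ∧ ∃ O'' : List (Fm A), IsBoxOcc b O'' φ ∧ OccLe O O'' ∧ OccLe O'' O'

/-- φ is agent-nonrepeating: no □_a-occurrence lies below another □_a-occurrence. -/
def AgentNonrepeating {A : Type} (φ : Fm A) : Prop :=
  ∀ (a : A) (O O' : List (Fm A)), IsBoxOcc a O φ → IsBoxOcc a O' φ → O ≠ O' → ¬ OccLe O O'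

/-- Boolean evaluation treating atoms and boxed formulas as atomic. -/
def evalP {A : Type} (v : Fm A → Bool) : Fm A → Bool
  | .neg φ => ! evalP v φ
  | .and φ ψ => evalP v φ && evalP v ψ
  | φ => v φ

/-- Propositional tautologies (in the signature ¬, ∧, with boxed formulas atomic). -/
def Taut {A : Type} (φ : Fm A) : Prop := ∀ v : Fm A → Bool, evalP v φ = true

/-- Provability in the smallest normal modal logic containing the axioms `Ax`. -/
inductive Prv {A : Type} (Ax : Fm A → Prop) : Fm A → Prop
  | taut {φ : Fm A} : Taut φ → Prv Ax φ
  | ax {φ : Fm A} : Ax φ → Prv Ax φ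
  | k (a : A) (φ ψ : Fm A) :
      Prv Ax (Fm.imp (.box a (Fm.imp φ ψ)) (Fm.imp (.box a φ) (.box a ψ)))
  | mp {φ ψ : Fm A} : Prv Ax (Fm.imp φ ψ) → Prv Ax φ → Prv Ax ψ
  | nec {φ : Fm A} (a : A) : Prv Ax φ → Prv Ax (.box a φ)

def AxNone {A : Type} : Fm A → Prop := fun _ => False
def AxT {A : Type} : Fm A → Prop := fun χ => ∃ (a : A) (φ : Fm A), χ = Fm.imp (.box a φ) φ
def Ax4 {A : Type} : Fm A → Prop := fun χ => ∃ (a : A) (φ : Fm A), χ = Fm.imp (.box a φ) (.box a (.box a φ))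
def Ax5 {A : Type} : Fm A → Prop := fun χ => ∃ (a : A) (φ : Fm A), χ = Fm.imp (.neg (.box a φ)) (.box a (.neg (.box a φ)))
def AxB {A : Type} : Fm A → Prop := fun χ => ∃ (a : A) (φ : Fm A), χ = Fm.imp φ (.box a (Fm.dia a φ))
def AxD {A : Type} : Fm A → Prop := fun χ => ∃ (a : A) (φ : Fm A), χ = Fm.imp (.box a φ) (Fm.dia a φ)

def Ser {W : Type} (R : W → W → Prop) : Prop := ∀ u, ∃ v, R u v
def Eucl {W : Type} (R : W → W → Prop) : Prop := ∀ u v w, R u v → R u w → R v w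

/-- Agent-alternating bisimulation family (`none` plays the role of `alt`). -/
def IsAAFamily {A W1 W2 : Type} (M : Kripke A W1) (N : Kripke A W2)
    (f : Option A → W1 → W2 → Prop) : Prop :=
  ∀ (o : Option A) (u : W1) (v : W2), f o u v →
    (∀ n, M.V n u ↔ N.V n v) ∧
    (∀ b : A, o ≠ some b →
      (∀ u', M.R b u u' → ∃ v', N.R b v v' ∧ f (some b) u' v') ∧
      (∀ v', N.R b v v' → ∃ u', M.R b u u' ∧ f (some b) u' v'))

/-- Agent-nonrepeating bisimulation family. -/
def IsNRFamily {A W1 W2 : Type} (M : Kripke A W1) (N : Kripke A W2)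
    (f : Set A → W1 → W2 → Prop) : Prop :=
  ∀ (X : Set A) (u : W1) (v : W2), f X u v →
    (∀ n, M.V n u ↔ N.V n v) ∧
    (∀ x ∈ X,
      (∀ u', M.R x u u' → ∃ v', N.R x v v' ∧ f (X \ {x}) u' v') ∧
      (∀ v', N.R x v v' → ∃ u', M.R x u u' ∧ f (X \ {x}) u' v'))

/-- One step in an agent-alternating sequence. -/
def Step {A W : Type} (M : Kripke A W) : (Option A × W) → (Option A × W) → Prop :=
  fun x y => x.1 ≠ y.1 ∧ ∃ b : A, y.1 = some b ∧ M.R b x.2 y.2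

/-- Valid worlds of an agent-alternating unraveling. -/
def ValidSeq {A W : Type} (M : Kripke A W) (s : List (Option A × W)) : Prop :=
  s ≠ [] ∧ (∃ w, s.head? = some (none, w)) ∧ (∀ x ∈ s.tail, x.1 ≠ none) ∧
    List.Chain' (Step M) s

def UWorld {A W : Type} (M : Kripke A W) : Type := {s : List (Option A × W) // ValidSeq M s}

def lastEntry {A W : Type} {M : Kripke A W} (s : UWorld M) : Option A × W :=
  s.val.getLast s.prop.1

/-- N is an agent-alternating unraveling of M. -/
def IsAAUnraveling {A W : Type} (M : Kripke A W) (N : Kripke A (UWorld M)) : Prop :=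
  (∀ (b : A) (s : UWorld M), (lastEntry s).1 ≠ some b →
    ∀ t : UWorld M, N.R b s t ↔ ∃ w', M.R b (lastEntry s).2 w' ∧ t.val = s.val ++ [(some b, w')])
  ∧ (∀ n (s : UWorld M), N.V n s ↔ M.V n (lastEntry s).2)

/-- The canonical relation family between M and any of its agent-alternating unravelings. -/
def PFam {A W : Type} (M : Kripke A W) : Option A → W → UWorld M → Prop :=
  fun o u s => lastEntry s = (o, u)

/-- Finite agent-alternating bisimulation relations: `BisimN M N n (some a)` is ⇆_{-a}^n,
`BisimN M N n none` is ⇆_alt^n. -/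
def BisimN {A W1 W2 : Type} (M : Kripke A W1) (N : Kripke A W2) :
    ℕ → Option A → W1 → W2 → Prop
  | 0, _, u, v => ∀ n, M.V n u ↔ N.V n v
  | (n+1), o, u, v => (∀ m, M.V m u ↔ N.V m v) ∧
      ∀ b : A, o ≠ some b →
        (∀ u', M.R b u u' → ∃ v', N.R b v v' ∧ BisimN M N n (some b) u' v') ∧
        (∀ v', N.R b v v' → ∃ u', M.R b u u' ∧ BisimN M N n (some b) u' v')

/-- Standard n-bisimilarity. -/
def StdBisimN {A W1 W2 : Type} (M : Kripke A W1) (N : Kripke A W2) :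
    ℕ → W1 → W2 → Prop
  | 0, u, v => ∀ n, M.V n u ↔ N.V n v
  | (n+1), u, v => (∀ m, M.V m u ↔ N.V m v) ∧
      ∀ b : A,
        (∀ u', M.R b u u' → ∃ v', N.R b v v' ∧ StdBisimN M N n u' v') ∧
        (∀ v', N.R b v v' → ∃ u', M.R b u u' ∧ StdBisimN M N n u' v')


section Stmt11Helpers

variable {A : Type} {Ax : Fm A → Prop}

lemma evalP_neg (v : Fm A → Bool) (φ : Fm A) : evalP v (.neg φ) = !evalP v φ := rfl
lemma evalP_and (v : Fm A → Bool) (φ ψ : Fm A) :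
    evalP v (.and φ ψ) = (evalP v φ && evalP v ψ) := rfl
lemma evalP_atom (v : Fm A → Bool) (n : ℕ) : evalP v (.atom n) = v (.atom n) := rfl
lemma evalP_box (v : Fm A → Bool) (a : A) (φ : Fm A) :
    evalP v (.box a φ) = v (.box a φ) := rfl

lemma prv_mono (a : A) {φ ψ : Fm A} (h : Prv Ax (Fm.imp φ ψ)) :
    Prv Ax (Fm.imp (.box a φ) (.box a ψ)) :=
  Prv.mp (Prv.k a φ ψ) (Prv.nec a h)

lemma taut_trans (φ ψ χ : Fm A) :
    Taut (Fm.imp (Fm.imp φ ψ) (Fm.imp (Fm.imp ψ χ) (Fm.imp φ χ))) := by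
  intro v
  simp only [Fm.imp, evalP_neg, evalP_and]
  cases evalP v φ <;> cases evalP v ψ <;> cases evalP v χ <;> rfl

lemma prv_trans {φ ψ χ : Fm A} (h1 : Prv Ax (Fm.imp φ ψ)) (h2 : Prv Ax (Fm.imp ψ χ)) :
    Prv Ax (Fm.imp φ χ) :=
  Prv.mp (Prv.mp (Prv.taut (taut_trans φ ψ χ)) h1) h2

lemma taut_contra (φ ψ : Fm A) :
    Taut (Fm.imp (Fm.imp (.neg φ) ψ) (Fm.imp (.neg ψ) φ)) := by
  intro v
  simp only [Fm.imp, evalP_neg, evalP_and]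
  cases evalP v φ <;> cases evalP v ψ <;> rfl

lemma prv_contra {φ ψ : Fm A} (h : Prv Ax (Fm.imp (.neg φ) ψ)) :
    Prv Ax (Fm.imp (.neg ψ) φ) :=
  Prv.mp (Prv.taut (taut_contra φ ψ)) h

lemma taut_contra2 (φ ψ : Fm A) :
    Taut (Fm.imp (Fm.imp φ ψ) (Fm.imp (.neg ψ) (.neg φ))) := by
  intro v
  simp only [Fm.imp, evalP_neg, evalP_and]
  cases evalP v φ <;> cases evalP v ψ <;> rfl

lemma prv_contra2 {φ ψ : Fm A} (h : Prv Ax (Fm.imp φ ψ)) :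
    Prv Ax (Fm.imp (.neg ψ) (.neg φ)) :=
  Prv.mp (Prv.taut (taut_contra2 φ ψ)) h

/-- □α → (□β → □(α ∧ β)). -/
lemma prv_box_and (a : A) (α β : Fm A) :
    Prv Ax (Fm.imp (.box a α) (Fm.imp (.box a β) (.box a (.and α β)))) := by
  have t : Taut (Fm.imp α (Fm.imp β (.and α β))) := by
    intro v
    simp only [Fm.imp, evalP_neg, evalP_and]
    cases evalP v α <;> cases evalP v β <;> rfl
  have h1 : Prv Ax (Fm.imp (.box a α) (.box a (Fm.imp β (.and α β)))) :=
    prv_mono a (Prv.taut t)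
  exact prv_trans h1 (Prv.k a β (.and α β))

end Stmt11Helpers


section Stmt11Sound

attribute [local instance] Classical.propDecidable

lemma sat_iff_eval {A W : Type} (M : Kripke A W) (w : W) (φ : Fm A) :
    Sat M w φ ↔ evalP (fun χ => decide (Sat M w χ)) φ = true := by
  induction φ with
  | atom n => simp [Sat, evalP_atom]; exact decide_eq_true_iff.symm
  | neg φ ih => simp [Sat, evalP_neg, ih]
  | and φ ψ ih1 ih2 => simp [Sat, evalP_and, ih1, ih2]
  | box a φ ih => simp [evalP_box]

lemma sound_KD {A W : Type} (M : Kripke A W) (hser : ∀ b : A, Ser (M.R b))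
    {φ : Fm A} (h : Prv AxD φ) : ∀ w, Sat M w φ := by
  induction h with
  | @taut φ ht => intro w; exact (sat_iff_eval M w φ).mpr (ht _)
  | ax hx =>
      obtain ⟨b, ψ, rfl⟩ := hx
      intro w
      obtain ⟨u, hu⟩ := hser b w
      simp only [Fm.imp, Fm.dia, Sat]
      rintro ⟨h1, h2⟩
      exact not_not.mp h2 u hu (h1 u hu)
  | k b φ ψ =>
      intro w
      simp only [Fm.imp, Sat]
      rintro ⟨h1, h2⟩
      obtain ⟨h3, h4⟩ := not_not.mp h2
      apply h4
      intro v hv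
      have h5 := h1 v hv
      have h6 := h3 v hv
      by_contra hc
      exact h5 ⟨h6, hc⟩
  | mp h1 h2 ih1 ih2 =>
      intro w
      have hi := ih1 w
      simp only [Fm.imp, Sat] at hi
      by_contra hc
      exact hi ⟨ih2 w, hc⟩
  | nec b h ih => exact fun w v _ => ih v

def MD (A : Type) : Kripke A Bool := ⟨fun _ _ v => v = true, fun _ w => w = true⟩

end Stmt11Sound

/-- (◇_a(p ∨ ¬p) ∧ □_a p) → p is agent-nonrepeating, a theorem of KB5, and not
a theorem of KD; hence KB5|_nr ⊄ KD|_nr. -/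
theorem stmt11 {A : Type} (hA : ∃ x y : A, x ≠ y) (a : A) :
    LX (Set.univ : Set A)
      (Fm.imp (.and (Fm.dia a (Fm.or (.atom 0) (.neg (.atom 0)))) (.box a (.atom 0)))
        (.atom 0)) ∧
    Prv (fun χ => AxB χ ∨ Ax5 χ)
      (Fm.imp (.and (Fm.dia a (Fm.or (.atom 0) (.neg (.atom 0)))) (.box a (.atom 0)))
        (.atom 0)) ∧
    ¬ Prv AxD
      (Fm.imp (.and (Fm.dia a (Fm.or (.atom 0) (.neg (.atom 0)))) (.box a (.atom 0)))
        (.atom 0)) ∧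
    ∃ φ : Fm A, LX (Set.univ : Set A) φ ∧ Prv (fun χ => AxB χ ∨ Ax5 χ) φ ∧
      ¬ Prv AxD φ := by
  classical
  set p : Fm A := .atom 0 with hp
  set T : Fm A := Fm.or p (.neg p) with hT
  have ax5B : ∀ χ : Fm A, Ax5 χ → (fun χ => AxB χ ∨ Ax5 χ) χ := fun _ h => Or.inr h
  -- KB5 derivation
  have h5 : Prv (fun χ => AxB χ ∨ Ax5 χ)
      (Fm.imp (.neg (.box a p)) (.box a (.neg (.box a p)))) :=
    Prv.ax (Or.inr ⟨a, p, rfl⟩)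
  have h5c : Prv (fun χ => AxB χ ∨ Ax5 χ)
      (Fm.imp (.neg (.box a (.neg (.box a p)))) (.box a p)) := prv_contra h5
  have hB4 : Prv (fun χ => AxB χ ∨ Ax5 χ)
      (Fm.imp (.box a p) (.box a (.neg (.box a (.neg (.box a p)))))) :=
    Prv.ax (Or.inl ⟨a, .box a p, rfl⟩)
  have h4 : Prv (fun χ => AxB χ ∨ Ax5 χ)
      (Fm.imp (.box a p) (.box a (.box a p))) :=
    prv_trans hB4 (prv_mono a h5c)
  have dn : Taut (Fm.imp p (.neg (.neg p))) := by
    intro v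
    simp only [Fm.imp, evalP_neg, evalP_and]
    cases evalP v p <;> rfl
  have hBn : Prv (fun χ => AxB χ ∨ Ax5 χ)
      (Fm.imp (.neg p) (.box a (.neg (.box a (.neg (.neg p)))))) :=
    Prv.ax (Or.inl ⟨a, .neg p, rfl⟩)
  have hc : Prv (fun χ => AxB χ ∨ Ax5 χ)
      (Fm.imp (.box a p) (.box a (.neg (.neg p)))) := prv_mono a (Prv.taut dn)
  have h6 : Prv (fun χ => AxB χ ∨ Ax5 χ)
      (Fm.imp (.neg p) (.box a (.neg (.box a p)))) :=
    prv_trans hBn (prv_mono a (prv_contra2 hc))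
  have s3 : Prv (fun χ => AxB χ ∨ Ax5 χ)
      (Fm.imp (.box a (.box a p)) (Fm.imp (.box a (.neg (.box a p)))
        (.box a (.and (.box a p) (.neg (.box a p)))))) :=
    prv_box_and a (.box a p) (.neg (.box a p))
  have tcontr : Taut (Fm.imp (.and (.box a p) (.neg (.box a p))) (.neg T)) := by
    intro v
    simp only [hT, hp, Fm.imp, Fm.or, evalP_neg, evalP_and]
    cases evalP v (Fm.box a (Fm.atom 0)) <;> cases evalP v (Fm.atom 0 : Fm A) <;> rfl
  have s4 : Prv (fun χ => AxB χ ∨ Ax5 χ)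
      (Fm.imp (.box a (.and (.box a p) (.neg (.box a p)))) (.box a (.neg T))) :=
    prv_mono a (Prv.taut tcontr)
  have tfin : Taut (Fm.imp (Fm.imp (.box a p) (.box a (.box a p)))
      (Fm.imp (Fm.imp (.neg p) (.box a (.neg (.box a p))))
      (Fm.imp (Fm.imp (.box a (.box a p)) (Fm.imp (.box a (.neg (.box a p)))
        (.box a (.and (.box a p) (.neg (.box a p))))))
      (Fm.imp (Fm.imp (.box a (.and (.box a p) (.neg (.box a p)))) (.box a (.neg T)))
      (Fm.imp (.and (.neg (.box a (.neg T))) (.box a p)) p))))) := by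
    intro v
    simp only [hT, hp, Fm.imp, Fm.or, evalP_neg, evalP_and, evalP_atom, evalP_box]
    cases v (Fm.atom 0 : Fm A) <;>
      cases v (Fm.box a (Fm.atom 0)) <;>
      cases v (Fm.box a (Fm.box a (Fm.atom 0))) <;>
      cases v (Fm.box a (Fm.neg (Fm.box a (Fm.atom 0)))) <;>
      cases v (Fm.box a (Fm.and (Fm.box a (Fm.atom 0)) (Fm.neg (Fm.box a (Fm.atom 0))))) <;>
      cases v (Fm.box a (Fm.neg (Fm.neg (Fm.and (Fm.neg (Fm.atom 0)) (Fm.neg (Fm.neg (Fm.atom 0))))))) <;> rfl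
  have hKB5 : Prv (fun χ => AxB χ ∨ Ax5 χ)
      (Fm.imp (.and (Fm.dia a T) (.box a p)) p) :=
    Prv.mp (Prv.mp (Prv.mp (Prv.mp (Prv.taut tfin) h4) h6) s3) s4
  -- LX
  have hLX : LX (Set.univ : Set A) (Fm.imp (.and (Fm.dia a T) (.box a p)) p) := by
    refine LX.neg (LX.and (LX.and (LX.neg (LX.box (Set.mem_univ a) ?_))
      (LX.box (Set.mem_univ a) (LX.atom _ _))) (LX.neg (LX.atom _ _)))
    exact LX.neg (LX.neg (LX.and (LX.neg (LX.atom _ _)) (LX.neg (LX.neg (LX.atom _ _)))))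
  -- not KD
  have hKD : ¬ Prv AxD (Fm.imp (.and (Fm.dia a T) (.box a p)) p) := by
    intro h
    have hser : ∀ b : A, Ser ((MD A).R b) := fun b u => ⟨true, rfl⟩
    have hs := sound_KD (MD A) hser h false
    simp only [Fm.imp, Fm.dia, hT, hp, Fm.or, Sat, MD] at hs
    apply hs
    refine ⟨⟨?_, ?_⟩, ?_⟩
    · intro hbox
      have := hbox true rfl
      apply this
      rintro ⟨h1, h2⟩
      exact h2 fun hv => h1 hv
    · intro v hv
      simpa [MD] using hv
    · simp [MD]
  exact ⟨hLX, hKB5, hKD, _, hLX, hKB5, hKD⟩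
end

section
/- Let A be a finite set of agents and a ∈ A. The formula (⋀_{x ∈ A\{a}} (□_x ⊥ ∧ □_a □_x ⊥) ∧ □_a p) → Cp is valid on all frames where every accessibility relation is transitive, but is not valid on all Kripke frames. Hence CK4 ∩ L_altC^p is not contained in CK ∩ L_altC^p. -/
/-- Formulas of the multi-agent modal language with common belief. -/
inductive CFm (A : Type) : Type
  | atom : ℕ → CFm A
  | neg : CFm A → CFm A
  | and : CFm A → CFm A → CFm A
  | box : A → CFm A → CFm A
  | cb : CFm A → CFm A

namespace CFm
def imp {A : Type} (φ ψ : CFm A) : CFm A := .neg (.and φ (.neg ψ))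
def or {A : Type} (φ ψ : CFm A) : CFm A := .neg (.and (.neg φ) (.neg ψ))
def dia {A : Type} (a : A) (φ : CFm A) : CFm A := .neg (.box a (.neg φ))
def cdual {A : Type} (φ : CFm A) : CFm A := .neg (.cb (.neg φ))
def bot {A : Type} : CFm A := .and (.atom 0) (.neg (.atom 0))
def verum {A : Type} : CFm A := .neg bot
def conj {A : Type} (l : List (CFm A)) : CFm A := l.foldr .and verum
end CFm

/-- Satisfaction; Cφ holds at u iff φ holds at all worlds reachable from u by the
transitive closure of the union of the accessibility relations. -/
def CSat {A W : Type} (M : Kripke A W) : W → CFm A → Prop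
  | w, .atom n => M.V n w
  | w, .neg φ => ¬ CSat M w φ
  | w, .and φ ψ => CSat M w φ ∧ CSat M w ψ
  | w, .box a φ => ∀ v, M.R a w v → CSat M v φ
  | w, .cb φ => ∀ v, Relation.TransGen (fun x y => ∃ a : A, M.R a x y) w v → CSat M v φ

/-- Formulas whose only modality is C. -/
inductive Conly {A : Type} : CFm A → Prop
  | atom (n : ℕ) : Conly (.atom n)
  | neg {φ : CFm A} : Conly φ → Conly (.neg φ)
  | and {φ ψ : CFm A} : Conly φ → Conly ψ → Conly (.and φ ψ)
  | cb {φ : CFm A} : Conly φ → Conly (.cb φ)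

/-- C-free agent-alternating fragments L_{-a} (within the C language). -/
inductive PLMinus {A : Type} : A → CFm A → Prop
  | atom (a : A) (n : ℕ) : PLMinus a (.atom n)
  | box {a x : A} {ψ : CFm A} : x ≠ a → PLMinus x ψ → PLMinus a (.box x ψ)
  | neg {a : A} {φ : CFm A} : PLMinus a φ → PLMinus a (.neg φ)
  | and {a : A} {φ ψ : CFm A} : PLMinus a φ → PLMinus a ψ → PLMinus a (.and φ ψ)

/-- C-free agent-alternating fragment L_alt (within the C language). -/
inductive PLAlt {A : Type} : CFm A → Prop
  | atom (n : ℕ) : PLAlt (.atom n)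
  | chi {φ : CFm A} (a : A) : PLMinus a φ → PLAlt φ
  | neg {φ : CFm A} : PLAlt φ → PLAlt (.neg φ)
  | and {φ ψ : CFm A} : PLAlt φ → PLAlt ψ → PLAlt (.and φ ψ)

/-- L_alt C^p: Boolean combinations of agent-alternating formulas and C-only formulas. -/
inductive LaltCp {A : Type} : CFm A → Prop
  | alt {φ : CFm A} : PLAlt φ → LaltCp φ
  | conly {φ : CFm A} : Conly φ → LaltCp φ
  | neg {φ : CFm A} : LaltCp φ → LaltCp (.neg φ)
  | and {φ ψ : CFm A} : LaltCp φ → LaltCp ψ → LaltCp (.and φ ψ)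

/-- The fragments C_{-a}: L_{-a} extended with the clause Cφ. -/
inductive CMinus {A : Type} : A → CFm A → Prop
  | atom (a : A) (n : ℕ) : CMinus a (.atom n)
  | box {a x : A} {ψ : CFm A} : x ≠ a → CMinus x ψ → CMinus a (.box x ψ)
  | neg {a : A} {φ : CFm A} : CMinus a φ → CMinus a (.neg φ)
  | and {a : A} {φ ψ : CFm A} : CMinus a φ → CMinus a ψ → CMinus a (.and φ ψ)
  | cb {a : A} {φ : CFm A} : CMinus a φ → CMinus a (.cb φ)

/-- The fragment C_alt: L_alt extended with the clause Cφ. -/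
inductive CAlt {A : Type} : CFm A → Prop
  | atom (n : ℕ) : CAlt (.atom n)
  | chi {φ : CFm A} (a : A) : CMinus a φ → CAlt φ
  | neg {φ : CFm A} : CAlt φ → CAlt (.neg φ)
  | and {φ ψ : CFm A} : CAlt φ → CAlt ψ → CAlt (.and φ ψ)
  | cb {φ : CFm A} : CAlt φ → CAlt (.cb φ)

/-- Validity on all frames whose relations satisfy P. -/
def CValidOn {A : Type} (P : ∀ {W : Type}, (W → W → Prop) → Prop) (φ : CFm A) : Prop :=
  ∀ (W : Type) (M : Kripke A W), (∀ a : A, P (M.R a)) → ∀ w : W, CSat M w φ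

lemma not_csat_bot {A W : Type} (M : Kripke A W) (w : W) : ¬ CSat M w CFm.bot := by
  rintro ⟨h, h'⟩; exact h' h

lemma csat_conj {A W : Type} (M : Kripke A W) (w : W) (l : List (CFm A)) :
    CSat M w (CFm.conj l) ↔ ∀ φ ∈ l, CSat M w φ := by
  induction l with
  | nil => simp [CFm.conj, CFm.verum, CSat, not_csat_bot M w]
  | cons φ l ih =>
    simp only [CFm.conj, List.foldr] at *
    constructor
    · rintro ⟨h1, h2⟩ ψ hψ
      rcases List.mem_cons.1 hψ with h | h
      · exact h ▸ h1
      · exact (ih.1 h2) ψ h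
    · intro h
      exact ⟨h φ List.mem_cons_self, ih.2 fun ψ hψ => h ψ (List.mem_cons_of_mem _ hψ)⟩

lemma plalt_conj {A : Type} (l : List (CFm A)) (h : ∀ φ ∈ l, PLAlt φ) :
    PLAlt (CFm.conj l) := by
  induction l with
  | nil =>
    exact PLAlt.neg (PLAlt.and (PLAlt.atom 0) (PLAlt.neg (PLAlt.atom 0)))
  | cons φ l ih =>
    exact PLAlt.and (h φ List.mem_cons_self)
      (ih fun ψ hψ => h ψ (List.mem_cons_of_mem _ hψ))

lemma part1 {A : Type} [Fintype A] [DecidableEq A] (a : A) :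
    CValidOn (fun {W} (R : W → W → Prop) => Transitive R)
      (CFm.imp
        (.and
          (CFm.conj ((Finset.univ.erase a).toList.map fun x =>
            CFm.and (.box x CFm.bot) (.box a (.box x CFm.bot))))
          (.box a (.atom 0)))
        (.cb (.atom 0))) := by
  intro W M hP w
  simp only [CFm.imp, CSat, not_and, not_not]
  rintro ⟨hconj, hboxp⟩
  have hmem : ∀ x : A, x ≠ a →
      CSat M w (CFm.and (.box x CFm.bot) (.box a (.box x CFm.bot))) := by
    intro x hx
    refine (csat_conj M w _).1 hconj _ ?_
    exact List.mem_map.2 ⟨x, (Finset.mem_toList).2 (Finset.mem_erase.2 ⟨hx, Finset.mem_univ x⟩), rfl⟩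
  intro v hv
  have key : M.R a w v := by
    induction hv with
    | single h =>
      obtain ⟨x, hx⟩ := h
      by_cases hxa : x = a
      · exact hxa ▸ hx
      · exact absurd ((hmem x hxa).1 _ hx) (not_csat_bot M _)
    | tail hwb step ih =>
      obtain ⟨x, hx⟩ := step
      by_cases hxa : x = a
      · exact hP a (ih) (hxa ▸ hx)
      · exact absurd ((hmem x hxa).2 _ ih _ hx) (not_csat_bot M _)
  exact hboxp v key

def cModel {A : Type} (a : A) : Kripke A (Fin 3) where
  R := fun x u v => x = a ∧ ((u = 0 ∧ v = 1) ∨ (u = 1 ∧ v = 2))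
  V := fun _ v => v = 1

lemma part2 {A : Type} [Fintype A] [DecidableEq A] (a : A) :
    ¬ CValidOn (fun {W} (R : W → W → Prop) => True)
      (CFm.imp
        (.and
          (CFm.conj ((Finset.univ.erase a).toList.map fun x =>
            CFm.and (.box x CFm.bot) (.box a (.box x CFm.bot))))
          (.box a (.atom 0)))
        (.cb (.atom 0))) := by
  intro h
  have := h (Fin 3) (cModel a) (fun _ => trivial) 0
  simp only [CFm.imp, CSat, not_and, not_not] at this
  have hc := this ⟨?_, ?_⟩
  · -- cb (atom 0) at 0: derive contradiction at world 2
    have h2 : Relation.TransGen (fun x y => ∃ b : A, (cModel a).R b x y) 0 2 :=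
      Relation.TransGen.tail (Relation.TransGen.single ⟨a, rfl, Or.inl ⟨rfl, rfl⟩⟩)
        ⟨a, rfl, Or.inr ⟨rfl, rfl⟩⟩
    have := hc 2 h2
    simp [cModel, CSat] at this
  · -- the conjunction holds
    rw [csat_conj]
    intro φ hφ
    obtain ⟨x, hx, rfl⟩ := List.mem_map.1 hφ
    have hxa : x ≠ a := (Finset.mem_erase.1 ((Finset.mem_toList).1 hx)).1
    constructor
    · intro v hv; exact absurd hv.1 hxa
    · intro v hv u hu; exact absurd hu.1 hxa
  · -- box a (atom 0) at 0
    rintro v ⟨-, h⟩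
    rcases h with ⟨-, rfl⟩ | ⟨h0, -⟩
    · rfl
    · exact absurd h0 (by decide)

/-- the formula (⋀_{x≠a}(□_x ⊥ ∧ □_a□_x ⊥) ∧ □_a p) → Cp is valid on transitive
frames but not on all frames; hence CK4 ∩ L_altC^p ⊄ CK ∩ L_altC^p. -/
theorem stmt14 {A : Type} [Fintype A] [DecidableEq A] (hA : ∃ x y : A, x ≠ y) (a : A) :
    CValidOn (fun {W} (R : W → W → Prop) => Transitive R)
      (CFm.imp
        (.and
          (CFm.conj ((Finset.univ.erase a).toList.map fun x =>
            CFm.and (.box x CFm.bot) (.box a (.box x CFm.bot))))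
          (.box a (.atom 0)))
        (.cb (.atom 0))) ∧
    ¬ CValidOn (fun {W} (R : W → W → Prop) => True)
      (CFm.imp
        (.and
          (CFm.conj ((Finset.univ.erase a).toList.map fun x =>
            CFm.and (.box x CFm.bot) (.box a (.box x CFm.bot))))
          (.box a (.atom 0)))
        (.cb (.atom 0))) ∧
    ∃ χ : CFm A, LaltCp χ ∧
      CValidOn (fun {W} (R : W → W → Prop) => Transitive R) χ ∧
      ¬ CValidOn (fun {W} (R : W → W → Prop) => True) χ := by
  obtain ⟨x₀, y₀, hxy⟩ := hA
  have hb : ∃ b : A, b ≠ a := by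
    by_cases h : x₀ = a
    · exact ⟨y₀, fun hc => hxy (h.trans hc.symm)⟩
    · exact ⟨x₀, h⟩
  obtain ⟨b, hb⟩ := hb
  refine ⟨part1 a, part2 a, _, ?_, part1 a, part2 a⟩
  apply LaltCp.neg
  apply LaltCp.and
  · apply LaltCp.and
    · apply LaltCp.alt
      apply plalt_conj
      intro φ hφ
      obtain ⟨x, hx, rfl⟩ := List.mem_map.1 hφ
      have hxa : x ≠ a := (Finset.mem_erase.1 ((Finset.mem_toList).1 hx)).1
      have hbot : ∀ c : A, PLMinus c (CFm.bot (A := A)) :=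
        fun c => PLMinus.and (PLMinus.atom c 0) (PLMinus.neg (PLMinus.atom c 0))
      exact PLAlt.and (PLAlt.chi a (PLMinus.box hxa (hbot x)))
        (PLAlt.chi b (PLMinus.box hb.symm (PLMinus.box hxa (hbot x))))
    · exact LaltCp.alt (PLAlt.chi b (PLMinus.box hb.symm (PLMinus.atom a 0)))
  · exact LaltCp.neg (LaltCp.conly (Conly.cb (Conly.atom 0)))
end
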